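/- Let 0 < p ≤ 1 and let n ≥ 2 be an integer. Let a_1 ≤ a_2 ≤ … ≤ a_n be real numbers and let m = (a_1 + a_2 + … + a_n)/n be their mean. Then (n−1)(a_n − m)^p ≤ ((n−1)/n)^p · Σ_{1 ≤ i < j ≤ n} (a_j − a_i)^p. -/

import Mathlib

open Finset

/-- subadditivity of `t ↦ t^p` for `0 < p ≤ 1` on nonneg reals -/
lemma omdi_rpow_add_le (p : ℝ) (hp0 : 0 < p) (hp1 : p ≤ 1) (a b : ℝ)
    (ha : 0 ≤ a) (hb : 0 ≤ b) : (a + b) ^ p ≤ a ^ p + b ^ p := by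
  have h := NNReal.rpow_add_le_add_rpow a.toNNReal b.toNNReal hp0.le hp1
  have := NNReal.coe_le_coe.2 h
  simpa [NNReal.coe_rpow, Real.coe_toNNReal _ ha, Real.coe_toNNReal _ hb,
    Real.coe_toNNReal _ (add_nonneg ha hb)] using this

/-- superadditivity over finite sums -/
lemma omdi_rpow_sum_le (p : ℝ) (hp0 : 0 < p) (hp1 : p ≤ 1) (s : Finset ℕ) (f : ℕ → ℝ)
    (hf : ∀ i ∈ s, 0 ≤ f i) : (∑ i ∈ s, f i) ^ p ≤ ∑ i ∈ s, f i ^ p := by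
  induction s using Finset.cons_induction with
  | empty => simp [Real.zero_rpow hp0.ne']
  | cons a s has ih =>
    rw [Finset.sum_cons, Finset.sum_cons]
    have hfa : 0 ≤ f a := hf a (Finset.mem_cons_self _ _)
    have hfs : 0 ≤ ∑ i ∈ s, f i :=
      Finset.sum_nonneg fun i hi => hf i (Finset.mem_cons_of_mem hi)
    calc (f a + ∑ i ∈ s, f i) ^ p ≤ f a ^ p + (∑ i ∈ s, f i) ^ p :=
          omdi_rpow_add_le p hp0 hp1 _ _ hfa hfs
      _ ≤ f a ^ p + ∑ i ∈ s, f i ^ p := by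
          gcongr
          exact ih fun i hi => hf i (Finset.mem_cons_of_mem hi)

/-- top-block average lemma for antitone sequences -/
lemma omdi_top_block (x : ℕ → ℝ) (hx : Antitone x) (d k : ℕ) (hdk : d ≤ k) :
    (d : ℝ) * ∑ i ∈ range k, x i ≤ (k : ℝ) * ∑ i ∈ range d, x i := by
  have hsplit : ∑ i ∈ range k, x i = ∑ i ∈ range d, x i + ∑ i ∈ Ico d k, x i := by
    rw [Finset.range_eq_Ico, ← Finset.sum_Ico_consecutive _ (Nat.zero_le d) hdk]
    rw [Finset.range_eq_Ico]
  have h1 : (d : ℝ) * x d ≤ ∑ i ∈ range d, x i := by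
    calc (d : ℝ) * x d = ∑ _i ∈ range d, x d := by simp [mul_comm]
      _ ≤ ∑ i ∈ range d, x i := by
          apply Finset.sum_le_sum
          intro i hi
          exact hx (Nat.le_of_lt (Finset.mem_range.1 hi))
  have h2 : ∑ i ∈ Ico d k, x i ≤ (k - d : ℕ) * x d := by
    calc ∑ i ∈ Ico d k, x i ≤ ∑ _i ∈ Ico d k, x d := by
          apply Finset.sum_le_sum
          intro i hi
          exact hx (Finset.mem_Ico.1 hi).1
      _ = (k - d : ℕ) * x d := by simp [Nat.card_Ico]
  have hd0 : (0:ℝ) ≤ d := Nat.cast_nonneg d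
  have hkd : (0:ℝ) ≤ (k - d : ℕ) := Nat.cast_nonneg _
  have key : (d : ℝ) * ∑ i ∈ Ico d k, x i ≤ ((k - d : ℕ) : ℝ) * ∑ i ∈ range d, x i := by
    calc (d : ℝ) * ∑ i ∈ Ico d k, x i ≤ (d : ℝ) * ((k - d : ℕ) * x d) := by
          exact mul_le_mul_of_nonneg_left h2 hd0
      _ = ((k - d : ℕ) : ℝ) * ((d:ℝ) * x d) := by ring
      _ ≤ ((k - d : ℕ) : ℝ) * ∑ i ∈ range d, x i := mul_le_mul_of_nonneg_left h1 hkd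
  have hcast : ((k - d : ℕ) : ℝ) = (k : ℝ) - d := by
    rw [Nat.cast_sub hdk]
  rw [hcast] at key
  rw [hsplit]
  nlinarith [key]

/-- bottom-block average lemma for antitone sequences -/
lemma omdi_bot_block (x : ℕ → ℝ) (hx : Antitone x) (e k : ℕ) (hek : e ≤ k) :
    (k : ℝ) * ∑ i ∈ Ico (k - e) k, x i ≤ (e : ℝ) * ∑ i ∈ range k, x i := by
  set t := k - e with ht
  have htk : t ≤ k := Nat.sub_le _ _
  have hsplit : ∑ i ∈ range k, x i = ∑ i ∈ range t, x i + ∑ i ∈ Ico t k, x i := by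
    rw [Finset.range_eq_Ico, ← Finset.sum_Ico_consecutive _ (Nat.zero_le t) htk]
    rw [Finset.range_eq_Ico]
  have h1 : ∑ i ∈ Ico t k, x i ≤ (e : ℝ) * x t := by
    calc ∑ i ∈ Ico t k, x i ≤ ∑ _i ∈ Ico t k, x t := by
          apply Finset.sum_le_sum
          intro i hi
          exact hx (Finset.mem_Ico.1 hi).1
      _ = ((k - t : ℕ) : ℝ) * x t := by simp [Nat.card_Ico]
      _ = (e : ℝ) * x t := by
          congr 2
          omega
  have h2 : (t : ℝ) * x t ≤ ∑ i ∈ range t, x i := by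
    calc (t : ℝ) * x t = ∑ _i ∈ range t, x t := by simp [mul_comm]
      _ ≤ ∑ i ∈ range t, x i := by
          apply Finset.sum_le_sum
          intro i hi
          exact hx (Nat.le_of_lt (Finset.mem_range.1 hi))
  have ht0 : (0:ℝ) ≤ t := Nat.cast_nonneg t
  have he0 : (0:ℝ) ≤ e := Nat.cast_nonneg e
  have hktcast : (k : ℝ) = (t : ℝ) + e := by
    have : t + e = k := by omega
    rw [← this]
    push_cast
    ring
  have key : (t : ℝ) * ∑ i ∈ Ico t k, x i ≤ (e : ℝ) * ∑ i ∈ range t, x i := by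
    calc (t : ℝ) * ∑ i ∈ Ico t k, x i ≤ (t : ℝ) * ((e : ℝ) * x t) :=
          mul_le_mul_of_nonneg_left h1 ht0
      _ = (e : ℝ) * ((t:ℝ) * x t) := by ring
      _ ≤ (e : ℝ) * ∑ i ∈ range t, x i := mul_le_mul_of_nonneg_left h2 he0
  rw [hsplit, hktcast]
  nlinarith [key]

/-- triangular sum reindexing by distance -/
lemma omdi_tri_reindex (n : ℕ) (g : ℕ → ℕ → ℝ) :
    ∑ j ∈ range n, ∑ i ∈ range j, g i j
      = ∑ d ∈ Ico 1 n, ∑ i ∈ range (n - d), g i (i + d) := by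
  rw [Finset.sum_sigma', Finset.sum_sigma']
  apply Finset.sum_nbij' (i := fun x => (⟨x.1 - x.2, x.2⟩ : Σ _d : ℕ, ℕ))
    (j := fun x => (⟨x.2 + x.1, x.2⟩ : Σ _j : ℕ, ℕ))
  · intro a ha
    simp only [Finset.mem_sigma, Finset.mem_range, Finset.mem_Ico] at ha ⊢
    omega
  · intro a ha
    simp only [Finset.mem_sigma, Finset.mem_range, Finset.mem_Ico] at ha ⊢
    omega
  · intro a ha
    simp only [Finset.mem_sigma, Finset.mem_range] at ha
    ext <;> simp <;> omega
  · intro a ha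
    simp only [Finset.mem_sigma, Finset.mem_range, Finset.mem_Ico] at ha
    ext <;> simp <;> omega
  · intro a ha
    simp only [Finset.mem_sigma, Finset.mem_range] at ha
    simp only []
    congr 1
    omega


/-- for `0 < p ≤ 1`, `n ≥ 2`, and reals `a₁ ≤ a₂ ≤ … ≤ aₙ` with mean `m`,
one has `(n-1)(aₙ - m)^p ≤ ((n-1)/n)^p ∑_{i<j} (aⱼ - aᵢ)^p`. -/
theorem ordered_mean_deviation_inequality (p : ℝ) (hp0 : 0 < p) (hp1 : p ≤ 1)
    (n : ℕ) (hn : 2 ≤ n) (a : Fin n → ℝ) (ha : Monotone a)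
    (m : ℝ) (hm : m = (∑ i : Fin n, a i) / n) :
    ((n : ℝ) - 1) * (a ⟨n - 1, by omega⟩ - m) ^ p ≤
      (((n : ℝ) - 1) / n) ^ p *
        ∑ i : Fin n, ∑ j : Fin n, if i < j then (a j - a i) ^ p else 0 := by
  have hn0 : 0 < n := by omega
  set M : ℝ := a ⟨n - 1, by omega⟩ with hM
  -- extend a to ℕ
  set b : ℕ → ℝ := fun i => if h : i < n then a ⟨i, h⟩ else M with hbdef
  have hbi : ∀ i (h : i < n), b i = a ⟨i, h⟩ := by
    intro i h; simp [hbdef, h]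
  have haM : ∀ i : Fin n, a i ≤ M := by
    intro i
    exact ha (by omega : (i : ℕ) ≤ n - 1)
  have hb : Monotone b := by
    intro i j hij
    by_cases hj : j < n
    · have hi : i < n := lt_of_le_of_lt hij hj
      rw [hbi i hi, hbi j hj]
      exact ha hij
    · rw [hbdef]
      simp only [hj, dif_neg, not_false_iff]
      by_cases hi : i < n
      · simp only [hi, dif_pos]
        exact haM _
      · simp [hi]
  have hbM : ∀ i, b i ≤ M := by
    intro i
    by_cases hi : i < n
    · rw [hbi i hi]; exact haM _
    · simp [hbdef, hi]
  have hblast : b (n - 1) = M := by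
    rw [hbi (n-1) (by omega)]
  -- x, T
  set x : ℕ → ℝ := fun i => M - b i with hxdef
  have hx : Antitone x := fun i j hij => by
    simp only [hxdef]
    have := hb hij
    linarith
  have hx0 : ∀ i, 0 ≤ x i := fun i => by simp only [hxdef]; linarith [hbM i]
  have hxlast : x (n - 1) = 0 := by simp [hxdef, hblast]
  set T : ℝ := ∑ i ∈ Finset.range n, x i with hTdef
  have hT0 : 0 ≤ T := Finset.sum_nonneg fun i _ => hx0 i
  have hsuma : (∑ i : Fin n, a i) = ∑ i ∈ Finset.range n, b i := by
    rw [← Fin.sum_univ_eq_sum_range]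
    apply Finset.sum_congr rfl
    intro i _
    rw [hbi i i.isLt]
  have hT : T = n * (M - m) := by
    rw [hTdef, hm, hsuma]
    have h1 : ∑ i ∈ Finset.range n, x i
        = ∑ i ∈ Finset.range n, (M - b i) := rfl
    rw [h1, Finset.sum_sub_distrib, Finset.sum_const, Finset.card_range, nsmul_eq_mul]
    have hnne : (n : ℝ) ≠ 0 := by positivity
    field_simp
  have hnR : (0:ℝ) < (n:ℝ) := by exact_mod_cast hn0
  have hkR : (0:ℝ) < (n:ℝ) - 1 := by
    have : (2:ℝ) ≤ (n:ℝ) := by exact_mod_cast hn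
    linarith
  have hMm : M - m = T / n := by
    rw [hT]
    field_simp
  have hTr : T = ∑ i ∈ Finset.range (n-1), x i := by
    rw [hTdef]
    have h1 : n = (n - 1) + 1 := by omega
    rw [h1, Finset.sum_range_succ, ← h1, hxlast, add_zero]
  have hkcast : (((n-1 : ℕ)) : ℝ) = (n:ℝ) - 1 := by
    rw [Nat.cast_sub (by omega)]
    simp
  -- convert the Fin double sum to ℕ sums
  have hS : (∑ i : Fin n, ∑ j : Fin n, if i < j then (a j - a i) ^ p else 0)
      = ∑ j ∈ Finset.range n, ∑ i ∈ Finset.range j, (b j - b i) ^ p := by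
    rw [Finset.sum_comm]
    have h1 : ∀ j : Fin n, (∑ i : Fin n, if i < j then (a j - a i) ^ p else 0)
        = (fun k : ℕ => ∑ i ∈ Finset.range k, (b k - b i) ^ p) (j : ℕ) := by
      intro j
      have h2 : (∑ i : Fin n, if i < j then (a j - a i) ^ p else 0)
          = ∑ i : Fin n, (fun k : ℕ =>
              if k < (j:ℕ) then (b (j:ℕ) - b k) ^ p else 0) (i : ℕ) := by
        apply Finset.sum_congr rfl
        intro i _
        simp only [Fin.lt_def]
        by_cases h : (i:ℕ) < (j:ℕ)
        · simp only [h, if_true, hbi i i.isLt, hbi j j.isLt, Fin.eta]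
        · simp only [h, if_false]
      calc (∑ i : Fin n, if i < j then (a j - a i) ^ p else 0)
          = ∑ i : Fin n, (fun k : ℕ =>
              if k < (j:ℕ) then (b (j:ℕ) - b k) ^ p else 0) (i : ℕ) := h2
        _ = ∑ i ∈ Finset.range n,
              (if i < (j:ℕ) then (b (j:ℕ) - b i) ^ p else 0) :=
            Fin.sum_univ_eq_sum_range
              (fun k : ℕ => if k < (j:ℕ) then (b (j:ℕ) - b k) ^ p else 0) n
        _ = ∑ i ∈ Finset.range (j:ℕ), (b (j:ℕ) - b i) ^ p := by
            rw [← Finset.sum_filter]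
            congr 1
            ext i
            simp only [Finset.mem_filter, Finset.mem_range]
            constructor
            · rintro ⟨_, h⟩; exact h
            · intro h; exact ⟨lt_trans h j.isLt, h⟩
    calc (∑ j : Fin n, ∑ i : Fin n, if i < j then (a j - a i) ^ p else 0)
        = ∑ j : Fin n,
            (fun k : ℕ => ∑ i ∈ Finset.range k, (b k - b i) ^ p) (j : ℕ) :=
          Finset.sum_congr rfl fun j _ => h1 j
      _ = ∑ j ∈ Finset.range n, ∑ i ∈ Finset.range j, (b j - b i) ^ p :=
          Fin.sum_univ_eq_sum_range
            (fun k : ℕ => ∑ i ∈ Finset.range k, (b k - b i) ^ p) n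
  rw [hS, omdi_tri_reindex]
  -- per-distance-class bound
  have hdbound : ∀ d ∈ Finset.Ico 1 n,
      (T / ((n:ℝ) - 1)) ^ p ≤ ∑ i ∈ Finset.range (n - d), (b (i + d) - b i) ^ p := by
    intro d hd
    obtain ⟨hd1, hdn⟩ := Finset.mem_Ico.1 hd
    -- telescoped drop
    have htel : ∑ i ∈ Finset.range (n - d), (b (i + d) - b i)
        = ∑ i ∈ Finset.range d, x i - ∑ i ∈ Finset.Ico (n - d) n, x i := by
      rw [Finset.sum_sub_distrib]
      have e1 : ∑ i ∈ Finset.range (n - d), b (i + d) = ∑ i ∈ Finset.Ico d n, b i := by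
        rw [Finset.sum_Ico_eq_sum_range]
        apply Finset.sum_congr rfl
        intro i _
        rw [add_comm]
      have e2 : ∑ i ∈ Finset.Ico d n, b i
          = ∑ i ∈ Finset.range n, b i - ∑ i ∈ Finset.range d, b i := by
        have : ∑ i ∈ Finset.range d, b i + ∑ i ∈ Finset.Ico d n, b i
            = ∑ i ∈ Finset.range n, b i := by
          rw [Finset.range_eq_Ico,
            Finset.sum_Ico_consecutive _ (Nat.zero_le d) (le_of_lt hdn)]
          rw [Finset.range_eq_Ico]
        linarith
      have e3 : ∑ i ∈ Finset.range (n - d), b i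
          = ∑ i ∈ Finset.range n, b i - ∑ i ∈ Finset.Ico (n - d) n, b i := by
        have : ∑ i ∈ Finset.range (n - d), b i + ∑ i ∈ Finset.Ico (n - d) n, b i
            = ∑ i ∈ Finset.range n, b i := by
          rw [Finset.range_eq_Ico,
            Finset.sum_Ico_consecutive _ (Nat.zero_le (n - d)) (Nat.sub_le n d)]
          rw [Finset.range_eq_Ico]
        linarith
      have e4 : ∑ i ∈ Finset.range d, x i
          = d * M - ∑ i ∈ Finset.range d, b i := by
        simp only [hxdef, Finset.sum_sub_distrib, Finset.sum_const,
          Finset.card_range, nsmul_eq_mul]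
      have e5 : ∑ i ∈ Finset.Ico (n - d) n, x i
          = d * M - ∑ i ∈ Finset.Ico (n - d) n, b i := by
        simp only [hxdef, Finset.sum_sub_distrib, Finset.sum_const, nsmul_eq_mul,
          Nat.card_Ico]
        congr 2
        have : n - (n - d) = d := by omega
        rw [this]
      rw [e1, e2, e3, e4, e5]
      ring
    -- the Ico part drops the zero last term
    have htail : ∑ i ∈ Finset.Ico (n - d) n, x i
        = ∑ i ∈ Finset.Ico ((n-1) - (d-1)) (n-1), x i := by
      have h1 : n = (n - 1) + 1 := by omega
      have h2 : (n - 1) - (d - 1) = n - d := by omega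
      rw [h2]
      rw [show Finset.Ico (n - d) n = Finset.Ico (n - d) ((n-1) + 1) by rw [← h1]]
      rw [Finset.sum_Ico_succ_top (by omega), hxlast, add_zero]
    -- block bounds
    have htop := omdi_top_block x hx d (n - 1) (by omega)
    have hbot := omdi_bot_block x hx (d - 1) (n - 1) (by omega)
    rw [← hTr] at htop hbot
    rw [hkcast] at htop hbot
    have hdcast : ((d:ℕ) : ℝ) ≥ 1 := by exact_mod_cast hd1
    have hd1cast : (((d - 1 : ℕ)) : ℝ) = (d:ℝ) - 1 := by
      rw [Nat.cast_sub (by omega)]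
      simp
    rw [hd1cast] at hbot
    -- (n-1) * drop ≥ T
    have hdrop : T ≤ ((n:ℝ) - 1) * ∑ i ∈ Finset.range (n - d), (b (i + d) - b i) := by
      rw [htel, htail]
      nlinarith [htop, hbot]
    have hdropnn : 0 ≤ ∑ i ∈ Finset.range (n - d), (b (i + d) - b i) :=
      Finset.sum_nonneg fun i _ => by
        have := hb (Nat.le_add_left d i)
        linarith [hb (Nat.le_add_right i d)]
    have hq : T / ((n:ℝ) - 1) ≤ ∑ i ∈ Finset.range (n - d), (b (i + d) - b i) := by
      rw [div_le_iff₀ hkR]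
      linarith [hdrop]
    calc (T / ((n:ℝ) - 1)) ^ p
        ≤ (∑ i ∈ Finset.range (n - d), (b (i + d) - b i)) ^ p :=
          Real.rpow_le_rpow (by positivity) hq hp0.le
      _ ≤ ∑ i ∈ Finset.range (n - d), (b (i + d) - b i) ^ p :=
          omdi_rpow_sum_le p hp0 hp1 _ _ fun i _ => by
            have := hb (Nat.le_add_right i d)
            linarith
  -- sum over distance classes
  have hcard : (Finset.Ico 1 n).card = n - 1 := by
    rw [Nat.card_Ico]
  have hsumd : ((n:ℝ) - 1) * (T / ((n:ℝ) - 1)) ^ p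
      ≤ ∑ d ∈ Finset.Ico 1 n, ∑ i ∈ Finset.range (n - d), (b (i + d) - b i) ^ p := by
    have := Finset.card_nsmul_le_sum (Finset.Ico 1 n)
      (fun d => ∑ i ∈ Finset.range (n - d), (b (i + d) - b i) ^ p)
      ((T / ((n:ℝ) - 1)) ^ p) hdbound
    rw [hcard, nsmul_eq_mul, hkcast] at this
    exact this
  -- final algebra
  rw [hMm]
  have hfact : (((n:ℝ) - 1) / n) ^ p * (((n:ℝ) - 1) * (T / ((n:ℝ) - 1)) ^ p)
      = ((n:ℝ) - 1) * (T / n) ^ p := by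
    rw [← mul_assoc, mul_comm ((((n:ℝ) - 1) / n) ^ p), mul_assoc]
    congr 1
    rw [← Real.mul_rpow (by positivity) (by positivity)]
    congr 1
    field_simp
  calc ((n:ℝ) - 1) * (T / n) ^ p
      = (((n:ℝ) - 1) / n) ^ p * (((n:ℝ) - 1) * (T / ((n:ℝ) - 1)) ^ p) := hfact.symm
    _ ≤ (((n:ℝ) - 1) / n) ^ p *
        ∑ d ∈ Finset.Ico 1 n, ∑ i ∈ Finset.range (n - d), (b (i + d) - b i) ^ p := by
        apply mul_le_mul_of_nonneg_left hsumd
        positivity
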